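/- Let Q = (Q(a))_{a∈A} be a family of subgroups of a group G, with N a subgroup of G acting on a set A, such that Fix_N(a) ⊆ Q(a) for all a ∈ A. Define the relation on G × A by (g,a) ∼ (h,b) iff there exists n ∈ N with b = n·a and g⁻¹hn ∈ Q(a). Then ∼ is an equivalence relation if and only if for all n ∈ N and a ∈ A, n·Q(a)·n⁻¹ = Q(n·a). -/
import Mathlib


/-- Let Q = (Q(a)) be a family of subgroups of G with N acting on A and
Fix_N(a) ⊆ Q(a). The relation (g,a) ∼ (h,b) iff ∃ n ∈ N with b = n·a and
g⁻¹hn ∈ Q(a) is an equivalence relation iff n Q(a) n⁻¹ = Q(n·a) for all n, a. -/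
theorem hovel_relation_equivalence_iff {G A : Type*} [Group G]
    (N : Subgroup G) [MulAction N A] (Q : A → Subgroup G)
    (h02 : ∀ (a : A) (m : N), m • a = a → (m : G) ∈ Q a) :
    Equivalence (fun p q : G × A =>
        ∃ n : N, q.2 = n • p.2 ∧ p.1⁻¹ * q.1 * (n : G) ∈ Q p.2) ↔
      ∀ (m : N) (a : A),
        (fun x => (m : G) * x * (m : G)⁻¹) '' (Q a : Set G) = (Q (m • a) : Set G) := by
  set r := fun p q : G × A =>
      ∃ n : N, q.2 = n • p.2 ∧ p.1⁻¹ * q.1 * (n : G) ∈ Q p.2 with hr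
  constructor
  · intro hEq
    have key : ∀ (m : N) (a : A) (q : G), q ∈ Q a →
        (m : G) * q * (m : G)⁻¹ ∈ Q (m • a) := by
      intro m a q hq
      have h1 : r ((1 : G), a) ((m : G)⁻¹, m • a) := by
        refine ⟨m, rfl, ?_⟩
        rw [show (1 : G)⁻¹ * (m : G)⁻¹ * (m : G) = 1 by group]
        exact (Q a).one_mem
      have h2 : r ((1 : G), a) (q * (m : G)⁻¹, m • a) := by
        refine ⟨m, rfl, ?_⟩
        rw [show (1 : G)⁻¹ * (q * (m : G)⁻¹) * (m : G) = q by group]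
        exact hq
      obtain ⟨n, hn, hmem⟩ := hEq.trans (hEq.symm h1) h2
      have hfix : (n : G) ∈ Q (m • a) := h02 _ n hn.symm
      have h4 := (Q (m • a)).mul_mem hmem ((Q (m • a)).inv_mem hfix)
      rwa [show (((m : G)⁻¹)⁻¹ * (q * (m : G)⁻¹) * (n : G)) * (n : G)⁻¹
          = (m : G) * q * (m : G)⁻¹ by group] at h4
    intro m a
    ext x
    constructor
    · rintro ⟨q, hq, rfl⟩
      exact key m a q hq
    · intro hx
      refine ⟨(m : G)⁻¹ * x * (m : G), ?_, by group⟩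
      have := key m⁻¹ (m • a) x hx
      simpa [inv_smul_smul] using this
  · intro hQ
    have hmem : ∀ (m : N) (a : A) (x : G),
        x ∈ Q (m • a) ↔ (m : G)⁻¹ * x * (m : G) ∈ Q a := by
      intro m a x
      constructor
      · intro hx
        have : x ∈ (fun y => (m : G) * y * (m : G)⁻¹) '' (Q a : Set G) := by
          rw [hQ m a]; exact hx
        obtain ⟨q, hq, rfl⟩ := this
        rwa [show (m : G)⁻¹ * ((m : G) * q * (m : G)⁻¹) * (m : G) = q by group]
      · intro hx
        have : x ∈ (fun y => (m : G) * y * (m : G)⁻¹) '' (Q a : Set G) :=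
          ⟨(m : G)⁻¹ * x * (m : G), hx, by group⟩
        rwa [hQ m a] at this
    constructor
    · intro p
      refine ⟨1, (one_smul _ _).symm, ?_⟩
      rw [show p.1⁻¹ * p.1 * ((1 : N) : G) = 1 by simp]
      exact (Q p.2).one_mem
    · rintro ⟨g, a⟩ ⟨h, b⟩ ⟨n, hb, hgh⟩
      refine ⟨n⁻¹, ?_, ?_⟩
      · dsimp only at hb ⊢
        rw [hb, inv_smul_smul]
      · dsimp only at hb ⊢
        subst hb
        rw [hmem n a]
        have := (Q a).inv_mem hgh
        rwa [show (n : G)⁻¹ * (h⁻¹ * g * ((n⁻¹ : N) : G)) * (n : G)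
            = (g⁻¹ * h * (n : G))⁻¹ by push_cast; group]
    · rintro ⟨g, a⟩ ⟨h, b⟩ ⟨k, c⟩ ⟨n1, hb, hgh⟩ ⟨n2, hc, hhk⟩
      refine ⟨n2 * n1, ?_, ?_⟩
      · dsimp only at *
        rw [hc, hb, mul_smul]
      · dsimp only at *
        subst hb
        rw [hmem n1 a] at hhk
        have := (Q a).mul_mem hgh hhk
        rwa [show (g⁻¹ * h * (n1 : G)) * ((n1 : G)⁻¹ * (h⁻¹ * k * (n2 : G)) * (n1 : G))
            = g⁻¹ * k * ((n2 * n1 : N) : G) by push_cast; group] at this
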